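/- Assume (H1) and (H2^m) with m ≥ 1. Then the derivative of the general solution with respect to the initial value satisfies ‖D₃φ(t,s,η)‖_{s,t} ≤ K·e^{(K·M₁ − α)(t−s)} for all s ≤ t in I and all η ∈ X. -/

import Mathlib

open Set MeasureTheory Real

lemma seminorm_integral_le' {X : Type*} [NormedAddCommGroup X] [NormedSpace ℝ X] [CompleteSpace X]
    {α : Type*} [MeasurableSpace α] {μ : Measure α}
    (p : X → ℝ) (hadd : ∀ x y, p (x + y) ≤ p x + p y)
    (hsmul : ∀ (c : ℝ) (x : X), p (c • x) = |c| * p x)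
    {L : ℝ} (hL : ∀ x, p x ≤ L * ‖x‖)
    {f : α → X} (hf : Integrable f μ) :
    p (∫ a, f a ∂μ) ≤ ∫ a, p (f a) ∂μ := by
  have p0 : p 0 = 0 := by
    have := hsmul 0 0; simpa using this
  have pneg : ∀ x : X, p (-x) = p x := by
    intro x; have := hsmul (-1) x; simpa using this
  have pnonneg : ∀ x : X, 0 ≤ p x := by
    intro x
    have h1 := hadd x (-x)
    rw [add_neg_cancel, p0, pneg] at h1
    linarith
  set M : ℝ := max L 0 with hMdef
  have hM0 : 0 ≤ M := le_max_right _ _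
  have hM : ∀ x : X, p x ≤ M * ‖x‖ := fun x =>
    (hL x).trans (mul_le_mul_of_nonneg_right (le_max_left _ _) (norm_nonneg x))
  have plip : ∀ x y : X, |p x - p y| ≤ M * ‖x - y‖ := by
    intro x y
    rw [abs_le]
    constructor
    · have := hadd (y - x) x
      have h2 : p (y - x) ≤ M * ‖x - y‖ := by
        rw [← norm_neg, neg_sub]; exact hM _
      have h3 : y - x + x = y := by abel
      rw [h3] at this
      linarith
    · have := hadd (x - y) y
      have h2 : p (x - y) ≤ M * ‖x - y‖ := hM _
      have h3 : x - y + y = x := by abel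
      rw [h3] at this
      linarith
  have pcont : Continuous p := by
    apply (LipschitzWith.of_dist_le_mul (K := M.toNNReal) ?_).continuous
    intro x y
    rw [Real.coe_toNNReal M hM0, Real.dist_eq, dist_eq_norm]
    exact plip x y
  have hpf_meas : AEStronglyMeasurable (fun a => p (f a)) μ :=
    pcont.comp_aestronglyMeasurable hf.1
  have hpf_int : Integrable (fun a => p (f a)) μ := by
    apply Integrable.mono (hf.norm.const_mul M) hpf_meas
    filter_upwards with a
    rw [Real.norm_eq_abs, abs_of_nonneg (pnonneg _), Real.norm_eq_abs,
      abs_of_nonneg (by positivity)]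
    exact hM _
  by_cases h0 : (∫ a, f a ∂μ) = 0
  · rw [h0, p0]
    exact integral_nonneg fun a => pnonneg _
  · set x₀ : X := ∫ a, f a ∂μ with hx₀
    have H : ∀ c : ℝ, c • x₀ = 0 → c • (p x₀) = 0 := by
      intro c hc
      rcases smul_eq_zero.1 hc with h | h
      · rw [h, zero_smul]
      · exact absurd h h0
    obtain ⟨g, hg1, hg2⟩ := exists_extension_of_le_sublinear
      (LinearPMap.mkSpanSingleton' x₀ (p x₀) H) p
      (fun c hc x => by rw [hsmul, abs_of_pos hc])
      hadd
      (by
        rintro ⟨z, hz⟩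
        rcases Submodule.mem_span_singleton.1 hz with ⟨a, rfl⟩
        rw [LinearPMap.mkSpanSingleton'_apply]
        have : p (a • x₀) = |a| * p x₀ := hsmul a x₀
        rw [smul_eq_mul]
        calc a * p x₀ ≤ |a| * p x₀ :=
              mul_le_mul_of_nonneg_right (le_abs_self a) (pnonneg x₀)
          _ = p (a • x₀) := (hsmul a x₀).symm)
    have hgx₀ : g x₀ = p x₀ := by
      have hmem : x₀ ∈ Submodule.span ℝ ({x₀} : Set X) :=
        Submodule.mem_span_singleton_self x₀
      have := hg1 ⟨x₀, hmem⟩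
      rw [this]; exact LinearPMap.mkSpanSingleton'_apply_self _ _ _ _
    have hgbound : ∀ x : X, ‖g x‖ ≤ M * ‖x‖ := by
      intro x
      rw [Real.norm_eq_abs, abs_le]
      constructor
      · have := (hg2 (-x)).trans (hM (-x))
        rw [map_neg, norm_neg] at this
        linarith
      · exact (hg2 x).trans (hM x)
    set G : X →L[ℝ] ℝ := LinearMap.mkContinuous g M hgbound with hG
    have hGf : (∫ a, G (f a) ∂μ) = G x₀ := G.integral_comp_comm hf
    have hGp : G x₀ = p x₀ := hgx₀
    rw [← hGp, ← hGf]
    apply integral_mono (G.integrable_comp hf) hpf_int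
    intro a
    exact hg2 (f a)

lemma poly_int (s ρ : ℝ) (j : ℕ) :
    (∫ r in s..ρ, (r - s)^j) = (ρ - s)^(j+1)/(j+1) := by
  have := intervalIntegral.integral_comp_sub_right (a := s) (b := ρ) (fun x => x ^ j) s
  rw [this]
  simp [integral_pow]

theorem statement14
    {X : Type*} [NormedAddCommGroup X] [NormedSpace ℝ X] [CompleteSpace X]
    (τ₀ : ℝ)
    (Nt : ℝ → X → ℝ)
    (hNadd : ∀ t : ℝ, ∀ x y : X, Nt t (x + y) ≤ Nt t x + Nt t y)
    (hNsmul : ∀ t : ℝ, ∀ c : ℝ, ∀ x : X, Nt t (c • x) = |c| * Nt t x)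
    (ℓ : ℝ → ℝ)
    (hℓpos : ∀ t ∈ Set.Ici τ₀, 0 < ℓ t)
    (hℓloc : ∀ a b : ℝ, ∃ C : ℝ, ∀ t ∈ Set.Icc a b ∩ Set.Ici τ₀, ℓ t ≤ C)
    (hNequiv : ∀ t ∈ Set.Ici τ₀, ∀ x : X, (1 / ℓ t) * ‖x‖ ≤ Nt t x ∧ Nt t x ≤ ℓ t * ‖x‖)
    (Φ : ℝ → ℝ → X →L[ℝ] X)
    (hΦcont : ContinuousOn (fun p : ℝ × ℝ => Φ p.1 p.2) (Set.Ici τ₀ ×ˢ Set.Ici τ₀))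
    (hΦid : ∀ t ∈ Set.Ici τ₀, Φ t t = ContinuousLinearMap.id ℝ X)
    (hΦcomp : ∀ t ∈ Set.Ici τ₀, ∀ r ∈ Set.Ici τ₀, ∀ s ∈ Set.Ici τ₀,
      Φ t s = (Φ t r).comp (Φ r s))
    (K α : ℝ) (hK : 1 ≤ K) (hα : 0 < α)
    (hH1 : ∀ s ∈ Set.Ici τ₀, ∀ t ∈ Set.Ici τ₀, s ≤ t → ∀ x : X,
      Nt t (Φ t s x) ≤ K * Real.exp (-α * (t - s)) * Nt s x)
    (F : ℝ → X → X)
    (hFmeas : ∀ x : X, StronglyMeasurable (fun t => F t x))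
    (hFcont : ∀ᵐ t ∂(volume.restrict (Set.Ici τ₀)), Continuous (F t))
    (DF : ℝ → X → X →L[ℝ] X)
    (hDF : ∀ᵐ t ∂(volume.restrict (Set.Ici τ₀)), ∀ x : X, HasFDerivAt (F t) (DF t x) x)
    (M₁ : ℝ) (hM₁ : 0 ≤ M₁)
    (hDFbound : ∀ᵐ t ∂(volume.restrict (Set.Ici τ₀)), ∀ x v : X,
      Nt t (DF t x v) ≤ M₁ * Nt t v)
    (sol : ℝ → ℝ → X → X)
    (hsolCont : ContinuousOn (fun p : ℝ × ℝ × X => sol p.1 p.2.1 p.2.2)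
      (Set.Ici τ₀ ×ˢ Set.Ici τ₀ ×ˢ (Set.univ : Set X)))
    (hsolId : ∀ τ ∈ Set.Ici τ₀, ∀ x : X, sol τ τ x = x)
    (hsolGrp : ∀ t₀ ∈ Set.Ici τ₀, ∀ t₁ ∈ Set.Ici τ₀, ∀ t₂ ∈ Set.Ici τ₀, ∀ x : X,
      sol t₂ t₀ x = sol t₂ t₁ (sol t₁ t₀ x))
    (hVOC : ∀ s ∈ Set.Ici τ₀, ∀ t ∈ Set.Ici τ₀, ∀ η : X,
      sol t s η = Φ t s η + ∫ r in s..t, Φ t r (F r (sol r s η)))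
    (Dsol : ℝ → ℝ → X → X →L[ℝ] X)
    (hDsol : ∀ s ∈ Set.Ici τ₀, ∀ t ∈ Set.Ici τ₀, ∀ η : X,
      HasFDerivAt (sol t s) (Dsol t s η) η)
    (hVar : ∀ s ∈ Set.Ici τ₀, ∀ t ∈ Set.Ici τ₀, ∀ η : X,
      Dsol t s η
        = Φ t s + ∫ r in s..t, (Φ t r).comp ((DF r (sol r s η)).comp (Dsol r s η)))
    :
    ∀ s ∈ Set.Ici τ₀, ∀ t ∈ Set.Ici τ₀, s ≤ t → ∀ η v : X,
      Nt t (Dsol t s η v) ≤ K * Real.exp ((K * M₁ - α) * (t - s)) * Nt s v := by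
  intro s hs t ht hst η v
  have hNnonneg : ∀ (τ : ℝ) (x : X), 0 ≤ Nt τ x := by
    intro τ x
    have h0 : Nt τ 0 = 0 := by have := hNsmul τ 0 0; simpa using this
    have hneg : Nt τ (-x) = Nt τ x := by have := hNsmul τ (-1) x; simpa using this
    have h1 := hNadd τ x (-x)
    rw [add_neg_cancel, h0, hneg] at h1
    linarith
  have hc0 : 0 ≤ Nt s v := hNnonneg s v
  have hKM₁ : 0 ≤ K * M₁ := mul_nonneg (by linarith) hM₁
  -- the operator-valued integrand at final time t
  set T : ℝ → (X →L[ℝ] X) :=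
    fun r => (Φ t r).comp ((DF r (sol r s η)).comp (Dsol r s η)) with hTdef
  have hexp_le : K * Real.exp (-α * (t - s)) * Nt s v
      ≤ K * Real.exp ((K * M₁ - α) * (t - s)) * Nt s v := by
    apply mul_le_mul_of_nonneg_right _ hc0
    apply mul_le_mul_of_nonneg_left _ (by linarith)
    apply Real.exp_le_exp.2
    nlinarith [sub_nonneg.2 hst]
  by_cases hTi : IntegrableOn T (Set.Ioc s t) volume
  · -- Integrable case: Grönwall-type argument
    obtain ⟨L, hL⟩ := hℓloc s t
    have hLpos : 0 < L := lt_of_lt_of_le (hℓpos s hs) (hL s ⟨⟨le_refl s, hst⟩, hs⟩)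
    have cont1 : ContinuousOn (fun ρ : ℝ => Φ ρ s) (Set.Icc s t) := by
      apply hΦcont.comp ((continuous_id.prodMk continuous_const).continuousOn)
      intro ρ hρ
      exact ⟨le_trans hs hρ.1, hs⟩
    have cont2 : ContinuousOn (fun ρ : ℝ => Φ ρ t) (Set.Icc s t) := by
      apply hΦcont.comp ((continuous_id.prodMk continuous_const).continuousOn)
      intro ρ hρ
      exact ⟨le_trans hs hρ.1, ht⟩
    obtain ⟨C₁, hC₁⟩ := isCompact_Icc.exists_bound_of_continuousOn cont1
    obtain ⟨C₂, hC₂⟩ := isCompact_Icc.exists_bound_of_continuousOn cont2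
    have hC₁0 : 0 ≤ C₁ := le_trans (norm_nonneg _) (hC₁ s ⟨le_refl s, hst⟩)
    have hC₂0 : 0 ≤ C₂ := le_trans (norm_nonneg _) (hC₂ s ⟨le_refl s, hst⟩)
    have hTvi : IntegrableOn (fun r => T r v) (Set.Ioc s t) volume := by
      have h := (ContinuousLinearMap.apply ℝ X v).integrable_comp hTi
      simpa [IntegrableOn] using h
    set J : ℝ := ∫ r in Set.Ioc s t, ‖T r v‖ with hJdef
    have hJ0 : 0 ≤ J := integral_nonneg fun r => norm_nonneg _
    -- decomposition of the derivative at intermediate times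
    have hu_eq : ∀ ρ ∈ Set.Icc s t, Dsol ρ s η v
        = Φ ρ s v + ∫ r in s..ρ, Φ ρ t (T r v) := by
      intro ρ hρ
      have hρτ : ρ ∈ Set.Ici τ₀ := le_trans hs hρ.1
      have hTρi : IntervalIntegrable (fun r => (Φ ρ t).comp (T r)) volume s ρ := by
        rw [intervalIntegrable_iff_integrableOn_Ioc_of_le hρ.1]
        have h := (ContinuousLinearMap.compL ℝ X X X (Φ ρ t)).integrable_comp
          (hTi.mono_set (Set.Ioc_subset_Ioc_right hρ.2))
        simpa [IntegrableOn] using h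
      have hcongr : (∫ r in s..ρ, (Φ ρ r).comp ((DF r (sol r s η)).comp (Dsol r s η)))
          = ∫ r in s..ρ, (Φ ρ t).comp (T r) := by
        apply intervalIntegral.integral_congr
        intro r hr
        rw [Set.uIcc_of_le hρ.1] at hr
        have hrτ : r ∈ Set.Ici τ₀ := le_trans hs hr.1
        simp only [hTdef]
        rw [hΦcomp ρ hρτ t ht r hrτ, ContinuousLinearMap.comp_assoc]
      have happly := congrArg (fun (A : X →L[ℝ] X) => A v) (hVar s hs ρ hρτ η)
      rw [hcongr, ContinuousLinearMap.add_apply,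
        ContinuousLinearMap.intervalIntegral_apply hTρi v] at happly
      simpa only [ContinuousLinearMap.comp_apply] using happly
    -- crude uniform bound on [s, t]
    have hgbdd : ∀ ρ ∈ Set.Icc s t, Nt ρ (Dsol ρ s η v) ≤ L * (C₁ * ‖v‖ + C₂ * J) := by
      intro ρ hρ
      have hρτ : ρ ∈ Set.Ici τ₀ := le_trans hs hρ.1
      have hnorm : ‖Dsol ρ s η v‖ ≤ C₁ * ‖v‖ + C₂ * J := by
        rw [hu_eq ρ hρ]
        refine le_trans (norm_add_le _ _) (add_le_add ?_ ?_)
        · exact le_trans ((Φ ρ s).le_opNorm v)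
            (mul_le_mul_of_nonneg_right (hC₁ ρ hρ) (norm_nonneg v))
        · refine le_trans (intervalIntegral.norm_integral_le_integral_norm hρ.1) ?_
          rw [intervalIntegral.integral_of_le hρ.1]
          have h1 : (∫ r in Set.Ioc s ρ, ‖Φ ρ t (T r v)‖)
              ≤ ∫ r in Set.Ioc s ρ, C₂ * ‖T r v‖ := by
            apply integral_mono_of_nonneg
            · filter_upwards with r using norm_nonneg _
            · exact (((hTvi.mono_set (Set.Ioc_subset_Ioc_right hρ.2)).norm).const_mul C₂)
            · filter_upwards with r
              exact le_trans ((Φ ρ t).le_opNorm _)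
                (mul_le_mul_of_nonneg_right (hC₂ ρ hρ) (norm_nonneg _))
          have h2 : (∫ r in Set.Ioc s ρ, C₂ * ‖T r v‖)
              = C₂ * ∫ r in Set.Ioc s ρ, ‖T r v‖ := integral_const_mul _ _
          have h3 : (∫ r in Set.Ioc s ρ, ‖T r v‖) ≤ J := by
            apply setIntegral_mono_set hTvi.norm
            · filter_upwards with r using norm_nonneg _
            · exact HasSubset.Subset.eventuallyLE (Set.Ioc_subset_Ioc_right hρ.2)
          rw [h2] at h1
          exact le_trans h1 (mul_le_mul_of_nonneg_left h3 hC₂0)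
      calc Nt ρ (Dsol ρ s η v) ≤ ℓ ρ * ‖Dsol ρ s η v‖ := (hNequiv ρ hρτ _).2
        _ ≤ L * (C₁ * ‖v‖ + C₂ * J) :=
          mul_le_mul (hL ρ ⟨hρ, hρτ⟩) hnorm (norm_nonneg _) (le_of_lt hLpos)
    set A₀ : ℝ := Real.exp (α * (t - s)) * (L * (C₁ * ‖v‖ + C₂ * J)) with hA₀def
    have hbase0 : 0 ≤ L * (C₁ * ‖v‖ + C₂ * J) := by positivity
    have hA₀0 : 0 ≤ A₀ := by positivity
    have hgA : ∀ ρ ∈ Set.Icc s t, Nt ρ (Dsol ρ s η v) ≤ Real.exp (-α * (ρ - s)) * A₀ := by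
      intro ρ hρ
      have h1 : Real.exp (-α * (ρ - s)) * A₀
          = Real.exp (α * (t - s) - α * (ρ - s)) * (L * (C₁ * ‖v‖ + C₂ * J)) := by
        rw [hA₀def, ← mul_assoc, ← Real.exp_add]
        ring_nf
      have h2 : (1:ℝ) ≤ Real.exp (α * (t - s) - α * (ρ - s)) :=
        Real.one_le_exp (by nlinarith [hρ.2])
      rw [h1]
      exact le_trans (hgbdd ρ hρ) (le_mul_of_one_le_left hbase0 h2)
    -- the iterated (Picard-type) bounds
    set B : ℕ → ℝ → ℝ := fun n ρ =>
      K * Nt s v * (∑ j ∈ Finset.range n,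
          ((K * M₁) ^ j / (Nat.factorial j : ℝ)) * (ρ - s) ^ j)
        + A₀ * (((K * M₁) ^ n / (Nat.factorial n : ℝ)) * (ρ - s) ^ n) with hBdef
    have hBcont : ∀ n : ℕ, Continuous (B n) := by
      intro n
      apply Continuous.add
      · exact continuous_const.mul (continuous_finset_sum _ fun j _ =>
          continuous_const.mul ((continuous_id.sub continuous_const).pow j))
      · exact continuous_const.mul
          (continuous_const.mul ((continuous_id.sub continuous_const).pow n))
    have hclaim : ∀ n : ℕ, ∀ ρ ∈ Set.Icc s t,
        Nt ρ (Dsol ρ s η v) ≤ Real.exp (-α * (ρ - s)) * B n ρ := by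
      intro n
      induction n with
      | zero =>
        intro ρ hρ
        have hB0 : B 0 ρ = A₀ := by simp [hBdef]
        rw [hB0]
        exact hgA ρ hρ
      | succ n ih =>
        intro ρ hρ
        have hsρ : s ≤ ρ := hρ.1
        have hρτ : ρ ∈ Set.Ici τ₀ := le_trans hs hsρ
        have hsub : Set.Ioc s ρ ⊆ Set.Ioc s t := Set.Ioc_subset_Ioc_right hρ.2
        have hfint : IntegrableOn (fun r => Φ ρ t (T r v)) (Set.Ioc s ρ) volume :=
          (Φ ρ t).integrable_comp (hTvi.mono_set hsub)
        have hstep1 : Nt ρ (Dsol ρ s η v) ≤ K * Real.exp (-α * (ρ - s)) * Nt s v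
            + ∫ r in Set.Ioc s ρ, Nt ρ (Φ ρ t (T r v)) := by
          rw [hu_eq ρ hρ]
          refine le_trans (hNadd ρ _ _) (add_le_add (hH1 s hs ρ hρτ hsρ v) ?_)
          rw [intervalIntegral.integral_of_le hsρ]
          exact seminorm_integral_le' (Nt ρ) (hNadd ρ) (hNsmul ρ)
            (fun x => (hNequiv ρ hρτ x).2) hfint
        have hae : ∀ᵐ r ∂(volume.restrict (Set.Ioc s ρ)),
            Nt ρ (Φ ρ t (T r v)) ≤ (K * M₁ * Real.exp (-α * (ρ - s))) * B n r := by
          have hDFb' : ∀ᵐ r ∂(volume.restrict (Set.Ioc s ρ)),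
              ∀ x w : X, Nt r (DF r x w) ≤ M₁ * Nt r w :=
            ae_restrict_of_ae_restrict_of_subset
              (fun r hr => le_trans hs (le_of_lt hr.1)) hDFbound
          filter_upwards [hDFb', ae_restrict_mem measurableSet_Ioc] with r hDFr hr
          have hrτ : r ∈ Set.Ici τ₀ := le_trans hs (le_of_lt hr.1)
          have hrIcc : r ∈ Set.Icc s t := ⟨le_of_lt hr.1, le_trans hr.2 hρ.2⟩
          have he1 : Φ ρ t (T r v)
              = Φ ρ r ((DF r (sol r s η)) (Dsol r s η v)) := by
            simp only [hTdef, ContinuousLinearMap.comp_apply]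
            rw [hΦcomp ρ hρτ t ht r hrτ]
            rfl
          calc Nt ρ (Φ ρ t (T r v))
              = Nt ρ (Φ ρ r ((DF r (sol r s η)) (Dsol r s η v))) := by rw [he1]
            _ ≤ K * Real.exp (-α * (ρ - r)) * Nt r ((DF r (sol r s η)) (Dsol r s η v)) :=
              hH1 r hrτ ρ hρτ hr.2 _
            _ ≤ K * Real.exp (-α * (ρ - r)) * (M₁ * Nt r (Dsol r s η v)) := by
              apply mul_le_mul_of_nonneg_left (hDFr (sol r s η) (Dsol r s η v))
              positivity
            _ ≤ K * Real.exp (-α * (ρ - r)) * (M₁ * (Real.exp (-α * (r - s)) * B n r)) := by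
              apply mul_le_mul_of_nonneg_left
                (mul_le_mul_of_nonneg_left (ih r hrIcc) hM₁)
              positivity
            _ = (K * M₁ * Real.exp (-α * (ρ - s))) * B n r := by
              rw [show -α * (ρ - s) = (-α * (ρ - r)) + (-α * (r - s)) by ring,
                Real.exp_add]
              ring
        have hmajint : IntegrableOn
            (fun r => (K * M₁ * Real.exp (-α * (ρ - s))) * B n r) (Set.Ioc s ρ) volume :=
          ((continuous_const.mul (hBcont n)).intervalIntegrable s ρ).1
        have hstep3 : (∫ r in Set.Ioc s ρ, Nt ρ (Φ ρ t (T r v)))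
            ≤ ∫ r in Set.Ioc s ρ, (K * M₁ * Real.exp (-α * (ρ - s))) * B n r := by
          apply integral_mono_of_nonneg ?_ hmajint hae
          filter_upwards with r using hNnonneg ρ _
        have hBint : (∫ r in s..ρ, B n r)
            = K * Nt s v * (∑ j ∈ Finset.range n,
                ((K * M₁) ^ j / (Nat.factorial j : ℝ)) * ((ρ - s) ^ (j + 1) / (↑j + 1)))
              + A₀ * (((K * M₁) ^ n / (Nat.factorial n : ℝ)) * ((ρ - s) ^ (n + 1) / (↑n + 1))) := by
          have hint_term : ∀ j : ℕ, IntervalIntegrable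
              (fun r : ℝ => ((K * M₁) ^ j / (Nat.factorial j : ℝ)) * (r - s) ^ j) volume s ρ :=
            fun j => (continuous_const.mul
              ((continuous_id.sub continuous_const).pow j)).intervalIntegrable s ρ
          have hint_sum : IntervalIntegrable (fun r : ℝ => K * Nt s v * ∑ j ∈ Finset.range n,
              ((K * M₁) ^ j / (Nat.factorial j : ℝ)) * (r - s) ^ j) volume s ρ :=
            (continuous_const.mul (continuous_finset_sum _ fun j _ =>
              continuous_const.mul
                ((continuous_id.sub continuous_const).pow j))).intervalIntegrable s ρ
          have hint_last : IntervalIntegrable (fun r : ℝ => A₀ *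
              (((K * M₁) ^ n / (Nat.factorial n : ℝ)) * (r - s) ^ n)) volume s ρ :=
            (continuous_const.mul (continuous_const.mul
              ((continuous_id.sub continuous_const).pow n))).intervalIntegrable s ρ
          simp only [hBdef]
          rw [intervalIntegral.integral_add hint_sum hint_last,
            intervalIntegral.integral_const_mul, intervalIntegral.integral_const_mul,
            intervalIntegral.integral_finset_sum (fun j _ => hint_term j)]
          congr 1
          · congr 1
            apply Finset.sum_congr rfl
            intro j _
            rw [intervalIntegral.integral_const_mul, poly_int]
          · rw [intervalIntegral.integral_const_mul, poly_int]
        have hterm : ∀ j : ℕ,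
            ((K * M₁) ^ (j + 1) / (Nat.factorial (j + 1) : ℝ)) * (ρ - s) ^ (j + 1)
            = K * M₁ * (((K * M₁) ^ j / (Nat.factorial j : ℝ))
                * ((ρ - s) ^ (j + 1) / ((j : ℝ) + 1))) := by
          intro j
          have h1 : (Nat.factorial j : ℝ) ≠ 0 := Nat.cast_ne_zero.2 (Nat.factorial_ne_zero j)
          have h2 : ((j : ℝ) + 1) ≠ 0 := by positivity
          rw [Nat.factorial_succ]
          push_cast
          field_simp
          ring
        have hfinal : K * Real.exp (-α * (ρ - s)) * Nt s v
            + (K * M₁ * Real.exp (-α * (ρ - s))) * (∫ r in s..ρ, B n r)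
            = Real.exp (-α * (ρ - s)) * B (n + 1) ρ := by
          rw [hBint]
          have hBsucc : B (n + 1) ρ = K * Nt s v * ((∑ j ∈ Finset.range n,
                ((K * M₁) ^ (j + 1) / (Nat.factorial (j + 1) : ℝ)) * (ρ - s) ^ (j + 1)) + 1)
              + A₀ * (((K * M₁) ^ (n + 1) / (Nat.factorial (n + 1) : ℝ)) * (ρ - s) ^ (n + 1)) := by
            simp only [hBdef]
            rw [Finset.sum_range_succ']
            norm_num
          rw [hBsucc, Finset.sum_congr rfl (fun j _ => hterm j), hterm n, ← Finset.mul_sum]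
          ring
        have hpull : (∫ r in Set.Ioc s ρ, (K * M₁ * Real.exp (-α * (ρ - s))) * B n r)
            = (K * M₁ * Real.exp (-α * (ρ - s))) * ∫ r in s..ρ, B n r := by
          rw [integral_const_mul, intervalIntegral.integral_of_le hsρ]
        calc Nt ρ (Dsol ρ s η v)
            ≤ K * Real.exp (-α * (ρ - s)) * Nt s v
              + ∫ r in Set.Ioc s ρ, Nt ρ (Φ ρ t (T r v)) := hstep1
          _ ≤ K * Real.exp (-α * (ρ - s)) * Nt s v
              + (K * M₁ * Real.exp (-α * (ρ - s))) * ∫ r in s..ρ, B n r := by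
            rw [← hpull]
            exact add_le_add (le_refl _) hstep3
          _ = Real.exp (-α * (ρ - s)) * B (n + 1) ρ := hfinal
    -- pass to the limit
    set Y : ℝ := K * M₁ * (t - s) with hYdef
    have hY0 : 0 ≤ Y := mul_nonneg hKM₁ (sub_nonneg.2 hst)
    have hseq : ∀ n : ℕ, Nt t (Dsol t s η v)
        ≤ Real.exp (-α * (t - s)) * (K * Nt s v * Real.exp Y
            + A₀ * (Y ^ n / (Nat.factorial n : ℝ))) := by
      intro n
      refine le_trans (hclaim n t ⟨hst, le_refl t⟩) ?_
      apply mul_le_mul_of_nonneg_left ?_ (le_of_lt (Real.exp_pos _))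
      simp only [hBdef]
      apply add_le_add
      · apply mul_le_mul_of_nonneg_left ?_ (by positivity : (0:ℝ) ≤ K * Nt s v)
        have heq : ∀ j ∈ Finset.range n,
            ((K * M₁) ^ j / (Nat.factorial j : ℝ)) * (t - s) ^ j
            = Y ^ j / (Nat.factorial j : ℝ) := by
          intro j _
          rw [hYdef, mul_pow (K * M₁) (t - s) j]
          ring
        rw [Finset.sum_congr rfl heq]
        exact Real.sum_le_exp_of_nonneg hY0 n
      · apply mul_le_mul_of_nonneg_left ?_ hA₀0
        rw [hYdef, mul_pow (K * M₁) (t - s) n]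
        exact le_of_eq (by ring)
    have htend : Filter.Tendsto (fun n : ℕ => Real.exp (-α * (t - s)) * (K * Nt s v * Real.exp Y
          + A₀ * (Y ^ n / (Nat.factorial n : ℝ)))) Filter.atTop
        (nhds (Real.exp (-α * (t - s)) * (K * Nt s v * Real.exp Y + A₀ * 0))) := by
      apply Filter.Tendsto.const_mul
      apply Filter.Tendsto.const_add
      exact (FloorSemiring.tendsto_pow_div_factorial_atTop Y).const_mul A₀
    have hle := ge_of_tendsto htend (Filter.Eventually.of_forall hseq)
    calc Nt t (Dsol t s η v)
        ≤ Real.exp (-α * (t - s)) * (K * Nt s v * Real.exp Y + A₀ * 0) := hle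
      _ = K * Real.exp ((K * M₁ - α) * (t - s)) * Nt s v := by
        rw [hYdef, show (K * M₁ - α) * (t - s) = -α * (t - s) + K * M₁ * (t - s) by ring,
          Real.exp_add]
        ring
  · -- non-integrable case: the integral is zero
    have h0 : (∫ r in s..t, T r) = 0 := by
      rw [intervalIntegral.integral_of_le hst]
      exact integral_undef hTi
    have hvar := hVar s hs t ht η
    rw [← hTdef, h0, add_zero] at hvar
    calc Nt t (Dsol t s η v) = Nt t (Φ t s v) := by rw [hvar]
      _ ≤ K * Real.exp (-α * (t - s)) * Nt s v := hH1 s hs t ht hst v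
      _ ≤ _ := hexp_le
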